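/- Let I be a nonempty index set and for each i ∈ I let F_i be a free group and θ_i : ℤ/2 → Aut(F_i) a homomorphism. Let p : ∗_{i∈I}(F_i ⋊_{θ_i} ℤ/2) → ℤ/2 be the homomorphism whose restriction to each free factor F_i ⋊_{θ_i} ℤ/2 is the projection onto ℤ/2. Then the kernel of p is a free group. -/

import Mathlib

open Multiplicative SemidirectProduct Monoid

namespace Stmt2Aux

/-- The generator of `Multiplicative (ZMod 2)`. -/
abbrev sg : Multiplicative (ZMod 2) := ofAdd 1

lemma zmod2_cases : ∀ x : Multiplicative (ZMod 2), x = 1 ∨ x = sg := by decide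

lemma sg_mul_sg : sg * sg = 1 := by decide

lemma sg_inv : sg⁻¹ = sg := by decide

lemma zmod2_hom_ext {M : Type*} [Monoid M] {f g : Multiplicative (ZMod 2) →* M}
    (h : f sg = g sg) : f = g := by
  refine MonoidHom.ext fun x => ?_
  rcases zmod2_cases x with rfl | rfl
  · simp
  · exact h

/-- A hom from `ℤ/2` sending the generator to a given involution. -/
def zmod2Hom {M : Type*} [Monoid M] (t : M) (ht : t * t = 1) :
    Multiplicative (ZMod 2) →* M where
  toFun x := if x = 1 then 1 else t
  map_one' := by simp
  map_mul' x y := by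
    rcases zmod2_cases x with rfl | rfl <;> rcases zmod2_cases y with rfl | rfl <;>
      simp [sg_mul_sg, ht, show sg ≠ 1 by decide]

@[simp] lemma zmod2Hom_sg {M : Type*} [Monoid M] (t : M) (ht : t * t = 1) :
    zmod2Hom t ht sg = t := by
  simp [zmod2Hom, show sg ≠ 1 by decide]

noncomputable section Main

variable {I : Type} {X : I → Type} (i₀ : I)
  (θ : ∀ i, Multiplicative (ZMod 2) →* MulAut (FreeGroup (X i)))

/-- Candidate basis of the kernel. -/
abbrev Y (I : Type) (X : I → Type) (i₀ : I) : Type := (Σ i, X i) ⊕ {i : I // i ≠ i₀}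

local notation "W" => FreeGroup (Y I X i₀)
local notation "G" => CoprodI (fun i => FreeGroup (X i) ⋊[θ i] Multiplicative (ZMod 2))

/-- The canonical inclusion of the `i`-th factor into `G`, with the family made explicit. -/
def ofG (i : I) : (FreeGroup (X i) ⋊[θ i] Multiplicative (ZMod 2)) →* G :=
  CoprodI.of (M := fun i => FreeGroup (X i) ⋊[θ i] Multiplicative (ZMod 2)) (i := i)

@[simp] lemma lift_ofG {H : Type*} [Monoid H]
    (f : ∀ i, (FreeGroup (X i) ⋊[θ i] Multiplicative (ZMod 2)) →* H) (i : I)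
    (m : FreeGroup (X i) ⋊[θ i] Multiplicative (ZMod 2)) :
    CoprodI.lift f (ofG θ i m) = f i m := by
  unfold ofG; exact CoprodI.lift_of _ _

/-- Inclusion of the `i`-th free group into `W`. -/
def A (i : I) : FreeGroup (X i) →* W :=
  FreeGroup.lift fun x => FreeGroup.of (Sum.inl ⟨i, x⟩)

/-- Correcting elements. -/
noncomputable def C (i : I) : W :=
  haveI := Classical.dec (i = i₀)
  if h : i = i₀ then 1 else FreeGroup.of (Sum.inr ⟨i, h⟩)

/-- The involution of `W` corresponding to conjugation by `t`. -/
def e : W →* W :=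
  FreeGroup.lift fun y =>
    match y with
    | Sum.inl ⟨i, x⟩ => (C i₀ i)⁻¹ * A i₀ i (θ i sg (FreeGroup.of x)) * C i₀ i
    | Sum.inr ⟨i, h⟩ => (FreeGroup.of (Sum.inr ⟨i, h⟩))⁻¹

lemma e_A (i : I) (w : FreeGroup (X i)) :
    e i₀ θ (A i₀ i w) = (C i₀ i)⁻¹ * A i₀ i (θ i sg w) * C i₀ i := by
  have : (e i₀ θ).comp (A i₀ i) =
      (MulAut.conj (C i₀ i)⁻¹).toMonoidHom.comp ((A i₀ i).comp (θ i sg).toMonoidHom) := by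
    apply FreeGroup.ext_hom
    intro x
    simp [e, A]
  simpa using DFunLike.congr_fun this w

lemma e_C (i : I) : e i₀ θ (C i₀ i) = (C i₀ i)⁻¹ := by
  unfold C
  split
  · simp
  · simp [e]

lemma theta_theta (i : I) (w : FreeGroup (X i)) : θ i sg (θ i sg w) = w := by
  have : θ i sg * θ i sg = 1 := by rw [← map_mul, sg_mul_sg, map_one]
  calc θ i sg (θ i sg w) = (θ i sg * θ i sg) w := rfl
    _ = w := by rw [this]; rfl

lemma e_e : (e i₀ θ).comp (e i₀ θ) = MonoidHom.id W := by
  apply FreeGroup.ext_hom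
  rintro (⟨i, x⟩ | ⟨i, h⟩)
  · show e i₀ θ (e i₀ θ (FreeGroup.of (Sum.inl ⟨i, x⟩))) = _
    have h1 : e i₀ θ (FreeGroup.of (Sum.inl ⟨i, x⟩)) =
        (C i₀ i)⁻¹ * A i₀ i (θ i sg (FreeGroup.of x)) * C i₀ i := by
      simp [e]
    rw [h1]
    simp only [map_mul, map_inv, e_C, e_A, inv_inv, theta_theta]
    simp [A]
    group
  · show e i₀ θ (e i₀ θ (FreeGroup.of (Sum.inr ⟨i, h⟩))) = _
    simp [e]

/-- The involution as an automorphism. -/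
def E : MulAut W :=
  { e i₀ θ with
    invFun := e i₀ θ
    left_inv := fun w => DFunLike.congr_fun (e_e i₀ θ) w
    right_inv := fun w => DFunLike.congr_fun (e_e i₀ θ) w }

@[simp] lemma E_apply (w : W) : E i₀ θ w = e i₀ θ w := rfl

lemma E_E : E i₀ θ * E i₀ θ = 1 := by
  ext w
  exact DFunLike.congr_fun (e_e i₀ θ) w

/-- The action of `ℤ/2` on `W`. -/
def φ : Multiplicative (ZMod 2) →* MulAut W := zmod2Hom (E i₀ θ) (E_E i₀ θ)

local notation "Wsd" => W ⋊[φ i₀ θ] Multiplicative (ZMod 2)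

/-- `t`, the image of the generator of the `i₀`-th copy of `ℤ/2` in `G`. -/
def tt : G := ofG θ i₀ (inr sg)

lemma tt_tt : tt i₀ θ * tt i₀ θ = 1 := by
  rw [tt, ← map_mul, ← map_mul, sg_mul_sg, map_one, map_one]

lemma tt_inv : (tt i₀ θ)⁻¹ = tt i₀ θ :=
  inv_eq_of_mul_eq_one_right (tt_tt i₀ θ)

/-- The image of `C i` in `G`. -/
def D (i : I) : G :=
  ofG θ i (inr sg) * tt i₀ θ

/-- The map `W →* G`. -/
def ΨW : W →* G :=
  FreeGroup.lift fun y =>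
    match y with
    | Sum.inl ⟨i, x⟩ => ofG θ i (inl (FreeGroup.of x))
    | Sum.inr ⟨i, _⟩ => D i₀ θ i

lemma ΨW_A (i : I) (w : FreeGroup (X i)) :
    ΨW i₀ θ (A i₀ i w) = ofG θ i (inl w) := by
  have : (ΨW i₀ θ).comp (A i₀ i) =
      (ofG θ i).comp (inl : FreeGroup (X i) →* FreeGroup (X i) ⋊[θ i] Multiplicative (ZMod 2)) := by
    apply FreeGroup.ext_hom
    intro x
    simp [ΨW, A]
  exact DFunLike.congr_fun this w

lemma ΨW_C (i : I) : ΨW i₀ θ (C i₀ i) = D i₀ θ i := by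
  unfold C
  split
  · subst ‹i = i₀›
    rw [map_one, D, ← tt, tt_tt]
  · simp [ΨW]

lemma ofG_inr_inv (i : I) : (ofG θ i (inr sg))⁻¹ = ofG θ i (inr sg) := by
  rw [← map_inv, ← map_inv, sg_inv]

lemma D_inv (i : I) : (D i₀ θ i)⁻¹ = tt i₀ θ * D i₀ θ i * (tt i₀ θ)⁻¹ := by
  rw [D, mul_inv_rev, tt_inv, ofG_inr_inv]
  conv_rhs => rw [mul_assoc, mul_assoc, tt_tt, mul_one]

lemma conj_inl (i : I) (w : FreeGroup (X i)) :
    ofG θ i (inr sg) * ofG θ i (inl w) * (ofG θ i (inr sg))⁻¹ =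
    ofG θ i (inl (θ i sg w)) := by
  rw [← map_inv, ← map_mul, ← map_mul]
  congr 1
  rw [inl_aut, map_inv]

lemma ΨW_compat : ∀ g, (ΨW i₀ θ).comp ((φ i₀ θ) g).toMonoidHom =
    (MulAut.conj ((zmod2Hom (tt i₀ θ) (tt_tt i₀ θ)) g)).toMonoidHom.comp (ΨW i₀ θ) := by
  intro g
  rcases zmod2_cases g with rfl | rfl
  · simp only [map_one]
    rfl
  · simp only [zmod2Hom_sg, φ]
    apply FreeGroup.ext_hom
    rintro (⟨i, x⟩ | ⟨i, h⟩) <;>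
      simp only [MonoidHom.comp_apply, MulEquiv.coe_toMonoidHom, E_apply,
        MulAut.conj_apply]
    · have h1 : e i₀ θ (FreeGroup.of (Sum.inl ⟨i, x⟩)) =
          (C i₀ i)⁻¹ * A i₀ i (θ i sg (FreeGroup.of x)) * C i₀ i := by simp [e]
      have h2 : ΨW i₀ θ (FreeGroup.of (Sum.inl ⟨i, x⟩)) =
          ofG θ i (inl (FreeGroup.of x)) := by simp [ΨW]
      rw [h1, h2, map_mul, map_mul, map_inv, ΨW_C, ΨW_A, D, mul_inv_rev, tt_inv]
      have hc := conj_inl θ i (FreeGroup.of x)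
      rw [← hc]
      group
    · have h1 : e i₀ θ (FreeGroup.of (Sum.inr ⟨i, h⟩)) =
          (FreeGroup.of (Sum.inr (⟨i, h⟩ : {i : I // i ≠ i₀})))⁻¹ := by simp [e]
      have h2 : ΨW i₀ θ (FreeGroup.of (Sum.inr (⟨i, h⟩ : {i : I // i ≠ i₀}))) =
          D i₀ θ i := by simp [ΨW]
      rw [h1, map_inv, h2]
      exact D_inv i₀ θ i

/-- The map `W ⋊ ℤ/2 →* G`. -/
def Ψ : Wsd →* G :=
  SemidirectProduct.lift (ΨW i₀ θ) (zmod2Hom (tt i₀ θ) (tt_tt i₀ θ)) (ΨW_compat i₀ θ)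

/-- The element `s i = (C i, σ)` of `W ⋊ ℤ/2`. -/
def s (i : I) : Wsd := inl (C i₀ i) * inr sg

lemma inr_conj_inl (w : W) :
    (inr sg : Wsd) * inl w * (inr sg : Wsd)⁻¹ = inl (e i₀ θ w) := by
  rw [← map_inv, ← inl_aut]
  congr 1

lemma s_s (i : I) : s i₀ θ i * s i₀ θ i = 1 := by
  rw [s]
  have : (inr sg : Wsd) * inl (C i₀ i) =
      inl (e i₀ θ (C i₀ i)) * inr sg := by
    rw [← inr_conj_inl]
    group
  calc inl (C i₀ i) * inr sg * (inl (C i₀ i) * inr sg)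
      = inl (C i₀ i) * (inr sg * inl (C i₀ i)) * inr sg := by group
    _ = inl (C i₀ i) * (inl (e i₀ θ (C i₀ i)) * inr sg) * inr sg := by rw [this]
    _ = inl (C i₀ i * e i₀ θ (C i₀ i)) * inr (sg * sg) := by
        rw [map_mul, map_mul]; group
    _ = 1 := by rw [e_C, mul_inv_cancel, sg_mul_sg, map_one, map_one, one_mul]

lemma Φ_compat (i : I) : ∀ g,
    ((inl : W →* Wsd).comp (A i₀ i)).comp ((θ i) g).toMonoidHom =
      (MulAut.conj ((zmod2Hom (s i₀ θ i) (s_s i₀ θ i)) g)).toMonoidHom.comp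
        ((inl : W →* Wsd).comp (A i₀ i)) := by
  intro g
  rcases zmod2_cases g with rfl | rfl
  · simp only [map_one]
    rfl
  · refine MonoidHom.ext fun w => ?_
    simp only [MonoidHom.comp_apply, MulEquiv.coe_toMonoidHom, MulAut.conj_apply,
      zmod2Hom_sg, s]
    rw [mul_inv_rev]
    rw [show (inl (C i₀ i) * inr sg : Wsd) * inl (A i₀ i w) *
          ((inr sg : Wsd)⁻¹ * (inl (C i₀ i) : Wsd)⁻¹)
        = inl (C i₀ i) * ((inr sg : Wsd) * inl (A i₀ i w) * (inr sg : Wsd)⁻¹) *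
            (inl (C i₀ i) : Wsd)⁻¹ from by group]
    rw [inr_conj_inl, e_A, ← map_inv, ← map_mul, ← map_mul]
    congr 1
    group

/-- The map `G →* W ⋊ ℤ/2`. -/
def Φ : G →* Wsd :=
  CoprodI.lift fun i =>
    SemidirectProduct.lift ((inl : W →* Wsd).comp (A i₀ i))
      (zmod2Hom (s i₀ θ i) (s_s i₀ θ i)) (Φ_compat i₀ θ i)

lemma ΨΦ : (Ψ i₀ θ).comp (Φ i₀ θ) = MonoidHom.id G := by
  apply CoprodI.ext_hom
  intro i
  apply SemidirectProduct.hom_ext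
  · apply FreeGroup.ext_hom
    intro x
    simp only [MonoidHom.comp_apply, MonoidHom.id_apply]
    rw [Φ, CoprodI.lift_of, lift_inl, MonoidHom.comp_apply, Ψ, lift_inl, ΨW_A]
    rfl
  · apply zmod2_hom_ext
    simp only [MonoidHom.comp_apply]
    rw [Φ, CoprodI.lift_of, lift_inr, zmod2Hom_sg, s, map_mul, Ψ, lift_inl, lift_inr,
      zmod2Hom_sg, ΨW_C, D, mul_assoc, tt_tt, mul_one]
    rfl

lemma ΦΨ : (Φ i₀ θ).comp (Ψ i₀ θ) = MonoidHom.id Wsd := by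
  apply SemidirectProduct.hom_ext
  · apply FreeGroup.ext_hom
    rintro (⟨i, x⟩ | ⟨i, h⟩) <;>
      simp only [MonoidHom.comp_apply, MonoidHom.id_apply, lift_inl, Ψ]
    · have h2 : ΨW i₀ θ (FreeGroup.of (Sum.inl ⟨i, x⟩)) =
          ofG θ i (inl (FreeGroup.of x)) := by simp [ΨW]
      rw [h2, Φ, lift_ofG, lift_inl]
      simp [A]
    · have h2 : ΨW i₀ θ (FreeGroup.of (Sum.inr (⟨i, h⟩ : {i : I // i ≠ i₀}))) =
          D i₀ θ i := by simp [ΨW]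
      rw [h2, D, map_mul, tt, Φ, lift_ofG, lift_ofG, lift_inr, lift_inr,
        zmod2Hom_sg, zmod2Hom_sg, s, s]
      have hC : C (X := X) i₀ i₀ = 1 := by simp [C]
      rw [hC, map_one, one_mul, mul_assoc, ← map_mul, sg_mul_sg, map_one, mul_one]
      rw [C, dif_neg h]
  · apply zmod2_hom_ext
    simp only [MonoidHom.comp_apply, MonoidHom.id_apply]
    rw [Ψ, lift_inr, zmod2Hom_sg, tt, Φ, lift_ofG, lift_inr, zmod2Hom_sg, s]
    have hC : C (X := X) i₀ i₀ = 1 := by simp [C]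
    rw [hC, map_one, one_mul]

/-- The isomorphism `G ≃* W ⋊ ℤ/2`. -/
def Eiso : G ≃* Wsd :=
  MonoidHom.toMulEquiv (Φ i₀ θ) (Ψ i₀ θ) (ΨΦ i₀ θ) (ΦΨ i₀ θ)

lemma p_eq : (CoprodI.lift fun i =>
      (rightHom : FreeGroup (X i) ⋊[θ i] Multiplicative (ZMod 2) →*
        Multiplicative (ZMod 2))) =
    (rightHom : Wsd →* Multiplicative (ZMod 2)).comp (Φ i₀ θ) := by
  apply CoprodI.ext_hom
  intro i
  apply SemidirectProduct.hom_ext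
  · apply FreeGroup.ext_hom
    intro x
    simp only [MonoidHom.comp_apply]
    simp [Φ, CoprodI.lift_of, rightHom_inl]
  · apply zmod2_hom_ext
    simp only [MonoidHom.comp_apply]
    rw [CoprodI.lift_of, Φ, CoprodI.lift_of, lift_inr, zmod2Hom_sg, rightHom_inr, s,
      map_mul, rightHom_inl, rightHom_inr, one_mul]

end Main

end Stmt2Aux

/-- the kernel of the homomorphism `∗_{i∈I}(F_i ⋊ ℤ/2) → ℤ/2` restricting on
each free factor to the projection onto `ℤ/2` is a free group. -/
theorem stmt_2 (I : Type) [Nonempty I] (X : I → Type)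
    (θ : ∀ i, Multiplicative (ZMod 2) →* MulAut (FreeGroup (X i))) :
    ∃ Y : Type,
      Nonempty
        ((MonoidHom.ker
            (Monoid.CoprodI.lift fun i =>
              (SemidirectProduct.rightHom :
                FreeGroup (X i) ⋊[θ i] Multiplicative (ZMod 2) →* Multiplicative (ZMod 2)))) ≃*
          FreeGroup Y) := by
  classical
  obtain ⟨i₀⟩ := ‹Nonempty I›
  refine ⟨Stmt2Aux.Y I X i₀, ⟨?_⟩⟩
  set p := (Monoid.CoprodI.lift fun i =>
    (SemidirectProduct.rightHom :
      FreeGroup (X i) ⋊[θ i] Multiplicative (ZMod 2) →* Multiplicative (ZMod 2))) with hp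
  have hker : Subgroup.map (Stmt2Aux.Eiso i₀ θ : _ →* _) p.ker =
      MonoidHom.ker (SemidirectProduct.rightHom :
        FreeGroup (Stmt2Aux.Y I X i₀) ⋊[Stmt2Aux.φ i₀ θ] Multiplicative (ZMod 2) →*
          Multiplicative (ZMod 2)) := by
    have h1 : p.ker = Subgroup.comap (Stmt2Aux.Φ i₀ θ)
        (MonoidHom.ker SemidirectProduct.rightHom) := by
      rw [MonoidHom.comap_ker, ← Stmt2Aux.p_eq, hp]
    have hsurj : Function.Surjective (Stmt2Aux.Φ i₀ θ) :=
      (Stmt2Aux.Eiso i₀ θ).surjective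
    rw [h1]
    exact Subgroup.map_comap_eq_self_of_surjective hsurj _
  refine ((Stmt2Aux.Eiso i₀ θ).subgroupMap p.ker).trans ?_
  refine (MulEquiv.subgroupCongr ?_).trans
    ((MulEquiv.subgroupCongr
      (SemidirectProduct.range_inl_eq_ker_rightHom).symm).trans
        (MonoidHom.ofInjective SemidirectProduct.inl_injective).symm)
  exact hker
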